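/- One-dimensional version of the equidistribution lemma: if α > 0 and r/α is irrational, then for any continuous compactly supported f : ℝ → ℝ, (1/N) Σ_{n=1}^N Σ_{k∈ℤ} f(αk - nr) · α converges as N → ∞ to ∫_ℝ f(x) dx. -/

import Mathlib

open MeasureTheory Filter

section Aux

open Complex

/-- Averages of powers of a unimodular `z ≠ 1` tend to zero. -/
lemma aux_avg_pow_tendsto_zero {z : ℂ} (hz1 : z ≠ 1) (hz : ‖z‖ = 1) :
    Tendsto (fun N : ℕ => (N : ℂ)⁻¹ * ∑ n ∈ Finset.Icc 1 N, z ^ n) atTop (nhds 0) := by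
  have hzsub : z - 1 ≠ 0 := sub_ne_zero.mpr hz1
  have key : ∀ N : ℕ, ‖(N : ℂ)⁻¹ * ∑ n ∈ Finset.Icc 1 N, z ^ n‖ ≤ (2 / ‖z - 1‖) / N := by
    intro N
    have hsum : ∑ n ∈ Finset.Icc 1 N, z ^ n = z * ((z ^ N - 1) / (z - 1)) := by
      rw [← Finset.Ico_add_one_right_eq_Icc, Finset.sum_Ico_eq_sum_range]
      simp only [Nat.add_sub_cancel]
      simp_rw [pow_add, pow_one, mul_comm z]
      rw [← Finset.sum_mul, geom_sum_eq hz1, div_mul_eq_mul_div, mul_comm]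
    have hb : ‖∑ n ∈ Finset.Icc 1 N, z ^ n‖ ≤ 2 / ‖z - 1‖ := by
      rw [hsum, norm_mul, hz, one_mul, norm_div]
      gcongr
      calc ‖z ^ N - 1‖ ≤ ‖z ^ N‖ + ‖(1 : ℂ)‖ := norm_sub_le _ _
        _ = 2 := by rw [norm_pow, hz, one_pow, norm_one]; norm_num
    rw [norm_mul, norm_inv, Complex.norm_natCast]
    calc (N : ℝ)⁻¹ * ‖∑ n ∈ Finset.Icc 1 N, z ^ n‖ ≤ (N : ℝ)⁻¹ * (2 / ‖z - 1‖) := by gcongr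
      _ = (2 / ‖z - 1‖) / N := by rw [inv_mul_eq_div]
  exact squeeze_zero_norm key (tendsto_const_div_atTop_nhds_zero_nat _)

/-- Weyl equidistribution on `AddCircle T`: if no nontrivial character is trivial at `y`,
then the Birkhoff averages of any continuous function along multiples of `y` converge to
the Haar integral. -/
lemma aux_weyl_tendsto {T : ℝ} [hT : Fact (0 < T)] (y : AddCircle T)
    (hy : ∀ m : ℤ, m ≠ 0 → fourier m y ≠ 1) (G : C(AddCircle T, ℂ)) :
    Tendsto (fun N : ℕ => (N : ℂ)⁻¹ * ∑ n ∈ Finset.Icc 1 N, G (n • y)) atTop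
      (nhds (∫ z, G z ∂AddCircle.haarAddCircle)) := by
  have hint : ∀ g : C(AddCircle T, ℂ), Integrable g AddCircle.haarAddCircle := fun g =>
    (map_continuous g).integrable_of_hasCompactSupport (isClosed_tsupport _).isCompact
  set S : Submodule ℂ C(AddCircle T, ℂ) :=
    { carrier := {g | Tendsto (fun N : ℕ => (N : ℂ)⁻¹ * ∑ n ∈ Finset.Icc 1 N, g (n • y)) atTop
        (nhds (∫ z, g z ∂AddCircle.haarAddCircle))}
      add_mem' := by
        intro a b ha hb
        have h1 : ∀ N : ℕ, (N : ℂ)⁻¹ * ∑ n ∈ Finset.Icc 1 N, (a + b) (n • y) =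
            ((N : ℂ)⁻¹ * ∑ n ∈ Finset.Icc 1 N, a (n • y)) +
            ((N : ℂ)⁻¹ * ∑ n ∈ Finset.Icc 1 N, b (n • y)) := by
          intro N
          simp only [ContinuousMap.add_apply]
          rw [Finset.sum_add_distrib, mul_add]
        have h2 : ∫ z, (a + b) z ∂AddCircle.haarAddCircle =
            (∫ z, a z ∂AddCircle.haarAddCircle) + ∫ z, b z ∂AddCircle.haarAddCircle := by
          simp only [ContinuousMap.add_apply]
          exact integral_add (hint a) (hint b)
        show Tendsto _ _ _
        rw [h2]
        exact Tendsto.congr (fun N => (h1 N).symm) (ha.add hb)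
      zero_mem' := by
        show Tendsto _ _ _
        simp only [ContinuousMap.zero_apply, Finset.sum_const_zero, mul_zero, integral_zero]
        exact tendsto_const_nhds
      smul_mem' := by
        intro c a ha
        have h1 : ∀ N : ℕ, (N : ℂ)⁻¹ * ∑ n ∈ Finset.Icc 1 N, (c • a) (n • y) =
            c * ((N : ℂ)⁻¹ * ∑ n ∈ Finset.Icc 1 N, a (n • y)) := by
          intro N
          simp only [ContinuousMap.smul_apply, smul_eq_mul]
          rw [← Finset.mul_sum]
          ring
        have h2 : ∫ z, (c • a) z ∂AddCircle.haarAddCircle =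
            c * ∫ z, a z ∂AddCircle.haarAddCircle := by
          simp only [ContinuousMap.smul_apply, smul_eq_mul]
          rw [integral_const_mul]
        show Tendsto _ _ _
        rw [h2]
        exact Tendsto.congr (fun N => (h1 N).symm) (ha.const_mul c)
      }
  have hclosed : IsClosed (S : Set C(AddCircle T, ℂ)) := by
    refine isClosed_of_closure_subset fun g hg => ?_
    show Tendsto _ _ _
    rw [Metric.tendsto_atTop]
    intro ε hε
    obtain ⟨h, hhS, hdist⟩ := Metric.mem_closure_iff.mp hg (ε / 3) (by linarith)
    obtain ⟨N₀, hN₀⟩ := Metric.tendsto_atTop.mp hhS (ε / 3) (by linarith)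
    refine ⟨max N₀ 1, fun N hN => ?_⟩
    have hN1 : 1 ≤ N := le_trans (le_max_right _ _) hN
    have hN0 : N₀ ≤ N := le_trans (le_max_left _ _) hN
    have hNpos : (0 : ℝ) < N := by exact_mod_cast hN1
    have e1 : dist ((N : ℂ)⁻¹ * ∑ n ∈ Finset.Icc 1 N, g (n • y))
        ((N : ℂ)⁻¹ * ∑ n ∈ Finset.Icc 1 N, h (n • y)) ≤ dist g h := by
      rw [dist_eq_norm, ← mul_sub, ← Finset.sum_sub_distrib, norm_mul, norm_inv,
        Complex.norm_natCast]
      have hb : ‖∑ n ∈ Finset.Icc 1 N, (g (n • y) - h (n • y))‖ ≤ N * dist g h := by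
        calc ‖∑ n ∈ Finset.Icc 1 N, (g (n • y) - h (n • y))‖
            ≤ ∑ n ∈ Finset.Icc 1 N, ‖g (n • y) - h (n • y)‖ := norm_sum_le _ _
          _ ≤ ∑ n ∈ Finset.Icc 1 N, dist g h := by
              refine Finset.sum_le_sum fun n _ => ?_
              rw [← dist_eq_norm]
              exact ContinuousMap.dist_apply_le_dist _
          _ = N * dist g h := by
              rw [Finset.sum_const, Nat.card_Icc, Nat.add_sub_cancel, nsmul_eq_mul]
      calc (N : ℝ)⁻¹ * ‖∑ n ∈ Finset.Icc 1 N, (g (n • y) - h (n • y))‖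
          ≤ (N : ℝ)⁻¹ * (N * dist g h) := by gcongr
        _ = dist g h := by field_simp
    have e2 : dist (∫ z, h z ∂AddCircle.haarAddCircle) (∫ z, g z ∂AddCircle.haarAddCircle)
        ≤ dist g h := by
      rw [dist_eq_norm, ← integral_sub (hint h) (hint g)]
      have := norm_integral_le_of_norm_le_const (μ := AddCircle.haarAddCircle)
        (f := fun z => h z - g z) (C := dist g h)
        (Filter.Eventually.of_forall fun z => by
          rw [← dist_eq_norm, dist_comm]
          exact ContinuousMap.dist_apply_le_dist z)
      simpa using this

    have key := hN₀ N hN0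
    have tri := dist_triangle4 ((N : ℂ)⁻¹ * ∑ n ∈ Finset.Icc 1 N, g (n • y))
      ((N : ℂ)⁻¹ * ∑ n ∈ Finset.Icc 1 N, h (n • y))
      (∫ z, h z ∂AddCircle.haarAddCircle) (∫ z, g z ∂AddCircle.haarAddCircle)
    have b1 := lt_of_le_of_lt e1 hdist
    have b3 := lt_of_le_of_lt e2 hdist
    linarith
  have hfourier : ∀ m : ℤ, fourier (T := T) m ∈ S := by
    intro m
    rcases eq_or_ne m 0 with rfl | hm
    · show Tendsto _ _ _
      have hint1 : ∫ z, fourier (T := T) 0 z ∂AddCircle.haarAddCircle = 1 := by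
        simp only [fourier_zero]
        simp [measure_univ]
      rw [hint1]
      refine Tendsto.congr' ?_ tendsto_const_nhds
      filter_upwards [eventually_ge_atTop 1] with N hN
      have hNne : (N : ℂ) ≠ 0 := by
        exact_mod_cast Nat.cast_ne_zero.mpr (by omega)
      simp only [fourier_zero, Finset.sum_const, Nat.card_Icc, Nat.add_sub_cancel, nsmul_eq_mul,
        mul_one]
      field_simp
    · have hadd : ∀ a b : AddCircle T, fourier m (a + b) = fourier m a * fourier m b := by
        intro a b
        simp_rw [fourier_apply, smul_add, AddCircle.toCircle_add]
        norm_cast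
      have hpow : ∀ n : ℕ, fourier m (n • y) = fourier m y ^ n := by
        intro n
        induction n with
        | zero =>
          simp only [zero_smul, pow_zero]
          have : fourier m ((0 : ℝ) : AddCircle T) = 1 := by
            rw [fourier_coe_apply]
            simp
          simpa using this

        | succ n ih =>
          rw [succ_nsmul, hadd, ih, pow_succ]
      have hz1 : fourier m y ≠ 1 := hy m hm
      have hznorm : ‖fourier m y‖ = 1 := by
        rw [fourier_apply]
        exact Circle.norm_coe _
      have hint0 : ∫ z, fourier (T := T) m z ∂AddCircle.haarAddCircle = 0 :=
        integral_eq_zero_of_add_right_eq_neg (fourier_add_half_inv_index hm hT.out)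
      show Tendsto _ _ _
      rw [hint0]
      refine Tendsto.congr (fun N => ?_) (aux_avg_pow_tendsto_zero hz1 hznorm)
      congr 1
      exact Finset.sum_congr rfl fun n _ => (hpow n).symm
  have htop := span_fourier_closure_eq_top (T := T) (hT := hT)
  have hle : (Submodule.span ℂ (Set.range (fourier (T := T)))).topologicalClosure ≤ S :=
    Submodule.topologicalClosure_minimal _
      (Submodule.span_le.mpr (Set.range_subset_iff.mpr hfourier)) hclosed
  have : G ∈ S := hle (by rw [htop]; trivial)
  exact this

end Aux

/-- One-dimensional equidistribution: if `r/α` is irrational, then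
`(1/N) Σ_{n=1}^N Σ_{k∈ℤ} f(αk - nr)·α → ∫_ℝ f` for continuous compactly
supported `f`. -/
theorem weyl_lattice_translates_equidistribute
    (α r : ℝ) (hα : 0 < α) (hirr : Irrational (r / α))
    (f : ℝ → ℝ) (hf : Continuous f) (hsupp : HasCompactSupport f) :
    Tendsto (fun N : ℕ =>
        (1 / (N : ℝ)) * ∑ n ∈ Finset.Icc 1 N, ∑' k : ℤ, f (α * k - n * r) * α)
      atTop (nhds (∫ x : ℝ, f x)) := by
  have hαne : α ≠ 0 := hα.ne'
  set β : ℝ := r / α with hβ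
  haveI : Fact ((0:ℝ) < 1) := ⟨one_pos⟩
  -- the rescaled complex-valued function
  set g : C(ℝ, ℂ) := ⟨fun x => (f (α * x) : ℂ),
    Complex.continuous_ofReal.comp (hf.comp (continuous_const.mul continuous_id))⟩ with hgdef
  have hgapp : ∀ x : ℝ, g x = (f (α * x) : ℂ) := fun x => rfl
  have hgsupp : HasCompactSupport ⇑g := by
    have h1 : HasCompactSupport (fun x : ℝ => (f x : ℂ)) :=
      hsupp.comp_left (g := Complex.ofReal) Complex.ofReal_zero
    have h2 := h1.comp_homeomorph (Homeomorph.mulLeft₀ α hαne)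
    exact h2
  -- local summability of translates
  have hloc : ∀ K : TopologicalSpace.Compacts ℝ,
      Summable fun n : ℤ => ‖(g.comp (ContinuousMap.addRight (n : ℝ))).restrict K‖ := by
    intro K
    apply summable_of_finite_support
    obtain ⟨M, hM⟩ := hgsupp.isBounded.subset_closedBall 0
    obtain ⟨R, hR⟩ := K.isCompact.isBounded.subset_closedBall 0
    refine Set.Finite.subset (Set.finite_Icc (⌈-(M + R)⌉ : ℤ) ⌊M + R⌋) ?_
    intro n hn
    simp only [Function.mem_support] at hn
    have hne : (g.comp (ContinuousMap.addRight (n : ℝ))).restrict K ≠ 0 := by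
      intro h0; exact hn (by rw [h0, norm_zero])
    have hex : ∃ x : K, g ((x : ℝ) + n) ≠ 0 := by
      by_contra hcon
      push_neg at hcon
      apply hne
      ext x
      exact hcon x
    obtain ⟨x, hx⟩ := hex
    have hxsupp : ((x : ℝ) + n) ∈ tsupport ⇑g := subset_tsupport _ hx
    have h1 : |(x : ℝ) + n| ≤ M := by
      have := hM hxsupp; simpa [Real.dist_eq] using this
    have h2 : |(x : ℝ)| ≤ R := by
      have := hR x.2; simpa [Real.dist_eq] using this
    have h3 : |(n : ℝ)| ≤ M + R := by
      have he : (n : ℝ) = ((x : ℝ) + n) - x := by ring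
      rw [he]
      calc |((x : ℝ) + n) - x| ≤ |(x : ℝ) + n| + |(x : ℝ)| := abs_sub _ _
        _ ≤ M + R := add_le_add h1 h2
    rw [abs_le] at h3
    simp only [Set.mem_Icc]
    exact ⟨Int.ceil_le.mpr (by exact_mod_cast h3.1), Int.le_floor.mpr (by exact_mod_cast h3.2)⟩
  have hsummable : Summable fun n : ℤ => g.comp (ContinuousMap.addRight ((n : ℤ) • (1 : ℝ))) := by
    have := ContinuousMap.summable_of_locally_summable_norm hloc
    simpa [zsmul_one] using this
  -- the periodization as a continuous map on the circle
  set GG : C(UnitAddCircle, ℂ) :=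
    ⟨(g.periodic_tsum_comp_add_zsmul 1).lift,
      continuous_coinduced_dom.mpr (map_continuous _)⟩ with hGGdef
  have hGGapply : ∀ x : ℝ, GG (x : UnitAddCircle) = ∑' n : ℤ, g (x + n) := by
    intro x
    have h1 : GG (x : UnitAddCircle) =
        (∑' n : ℤ, g.comp (ContinuousMap.addRight ((n : ℤ) • (1 : ℝ)))) x :=
      (g.periodic_tsum_comp_add_zsmul 1).lift_coe x
    rw [h1, ← ContinuousMap.tsum_apply hsummable]
    simp [zsmul_one]
  have hGGint : ∫ z, GG z ∂AddCircle.haarAddCircle = ∫ x : ℝ, g x := by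
    have h0 := Real.fourierCoeff_tsum_comp_add hloc 0
    calc ∫ z, GG z ∂AddCircle.haarAddCircle
        = fourierCoeff (Function.Periodic.lift (g.periodic_tsum_comp_add_zsmul 1)) 0 := by
          rw [fourierCoeff]
          simp only [neg_zero, fourier_zero, one_smul]
          rfl
      _ = FourierTransform.fourier (⇑g) ((0 : ℤ) : ℝ) := h0
      _ = ∫ x : ℝ, g x := by
          rw [Real.fourier_real_eq_integral_exp_smul]
          simp
  -- the rotation point is irrational, so no nontrivial character is trivial there
  have hy : ∀ m : ℤ, m ≠ 0 → fourier (T := 1) m (((-β : ℝ) : UnitAddCircle)) ≠ 1 := by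
    intro m hm h1
    rw [fourier_coe_apply] at h1
    rw [Complex.exp_eq_one_iff] at h1
    obtain ⟨k, hk⟩ := h1
    simp only [Complex.ofReal_one, div_one] at hk
    have hπ : ((Real.pi : ℂ)) ≠ 0 := Complex.ofReal_ne_zero.mpr Real.pi_ne_zero
    have h2 : ((m : ℂ) * ((-β : ℝ) : ℂ)) * (2 * (Real.pi : ℂ) * Complex.I) =
        (k : ℂ) * (2 * (Real.pi : ℂ) * Complex.I) := by
      rw [← hk]; push_cast; ring
    have h2' := mul_right_cancel₀
      (by simp [hπ, Complex.I_ne_zero] : (2 * (Real.pi : ℂ) * Complex.I) ≠ 0) h2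
    have h3 : (m : ℝ) * (-β) = (k : ℝ) := by exact_mod_cast h2'
    have hmR : (m : ℝ) ≠ 0 := Int.cast_ne_zero.mpr hm
    have hrat : β = (((-k : ℤ) : ℚ) / ((m : ℤ) : ℚ) : ℚ) := by
      push_cast
      field_simp
      linarith
    rw [hrat] at hirr
    exact (Rat.not_irrational _) hirr
  have hweyl := aux_weyl_tendsto (T := 1) (((-β : ℝ) : UnitAddCircle)) hy GG
  -- identify the summands
  have hab : α * β = r := by rw [hβ]; field_simp
  have hterm : ∀ n : ℕ, GG (n • (((-β : ℝ) : UnitAddCircle))) =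
      ((∑' k : ℤ, f (α * k - n * r) : ℝ) : ℂ) := by
    intro n
    have h1 : (n • (((-β : ℝ) : UnitAddCircle))) = (((n • (-β) : ℝ)) : UnitAddCircle) :=
      (AddCircle.coe_nsmul (1 : ℝ)).symm
    rw [h1, hGGapply, Complex.ofReal_tsum]
    congr 1
    funext k
    rw [hgapp]
    congr 2
    push_cast [nsmul_eq_mul]
    linear_combination (-(n : ℝ)) * hab
  -- take real parts
  have hre := (Complex.continuous_re.tendsto (∫ z, GG z ∂AddCircle.haarAddCircle)).comp hweyl
  have hgint : (∫ x : ℝ, g x) = ((α⁻¹ * ∫ x : ℝ, f x : ℝ) : ℂ) := by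
    have h1 : (∫ x : ℝ, g x) = ((∫ x : ℝ, f (α * x) : ℝ) : ℂ) := by
      simp_rw [hgapp]
      exact integral_ofReal
    rw [h1]
    norm_cast
    rw [MeasureTheory.Measure.integral_comp_mul_left (fun x => f x) α, smul_eq_mul,
      abs_of_pos (inv_pos.mpr hα)]
  have hcomp : ∀ N : ℕ,
      Complex.re ((N : ℂ)⁻¹ * ∑ n ∈ Finset.Icc 1 N, GG (n • (((-β : ℝ) : UnitAddCircle))))
      = (N : ℝ)⁻¹ * ∑ n ∈ Finset.Icc 1 N, ∑' k : ℤ, f (α * k - n * r) := by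
    intro N
    simp_rw [hterm]
    have he : ((N : ℂ)⁻¹ * ∑ n ∈ Finset.Icc 1 N, ((∑' k : ℤ, f (α * k - n * r) : ℝ) : ℂ)) =
        (((N : ℝ)⁻¹ * ∑ n ∈ Finset.Icc 1 N, ∑' k : ℤ, f (α * k - n * r) : ℝ) : ℂ) := by
      push_cast
      ring
    rw [he, Complex.ofReal_re]
  have hmain : Tendsto (fun N : ℕ =>
      (N : ℝ)⁻¹ * ∑ n ∈ Finset.Icc 1 N, ∑' k : ℤ, f (α * k - n * r)) atTop
      (nhds (α⁻¹ * ∫ x : ℝ, f x)) := by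
    have h2 : Complex.re (∫ z, GG z ∂AddCircle.haarAddCircle) = α⁻¹ * ∫ x : ℝ, f x := by
      rw [hGGint, hgint, Complex.ofReal_re]
    rw [← h2]
    exact Tendsto.congr hcomp hre
  have hfinal := hmain.const_mul α
  have hlim : α * (α⁻¹ * ∫ x : ℝ, f x) = ∫ x : ℝ, f x := by field_simp
  rw [hlim] at hfinal
  refine Tendsto.congr (fun N => ?_) hfinal
  have htsum : ∀ n : ℕ, (∑' k : ℤ, f (α * k - n * r) * α) =
      (∑' k : ℤ, f (α * k - n * r)) * α := fun n => tsum_mul_right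
  simp_rw [htsum]
  rw [← Finset.sum_mul, one_div]
  ring
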